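/- Let N be a real discrete-time martingale with N_∞ = ξ ∈ L_q, q > 1, and let V be an adapted nondecreasing process with V₀ = 0 and compensator Ṽ. Then E[ξ Ṽ_∞] = E[∑ₙ N_n (V_{n+1} − V_n)] ≤ E[N*_∞ V_∞], where N*_∞ = sup_n |N_n|. -/

import Mathlib

open MeasureTheory Finset
open scoped ENNReal NNReal

/-- Discrete-time duality identity used in the compensator `L_p` estimate: with
`N k = E[ξ | 𝒢 k]`, `V` adapted nondecreasing with `V 0 = 0` and compensator
`Ṽ n = ∑_{k<n} E[V (k+1) - V k | 𝒢 k]`, one has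
`E[ξ Ṽ_n] = E[∑_{k<n} N_k (V_{k+1} - V_k)] ≤ E[N*_n V_n]` where `N*_n = max_{k ≤ n} |N_k|`. -/
theorem stmt_10 {Ω : Type*} {mΩ : MeasurableSpace Ω} {μ : Measure Ω} [IsProbabilityMeasure μ]
    (𝒢 : Filtration ℕ mΩ) (ξ : Ω → ℝ) (q : ℝ) (hq : 1 < q)
    (hξ : MemLp ξ (ENNReal.ofReal q) μ)
    (N : ℕ → Ω → ℝ) (hN : ∀ k, N k = μ[ξ | 𝒢 k])
    (V Vt : ℕ → Ω → ℝ) (hadp : StronglyAdapted 𝒢 V) (hmono : ∀ ω, Monotone fun n => V n ω)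
    (h0 : V 0 = 0) (hVint : ∀ n, Integrable (V n) μ)
    (hVt : ∀ n ω, Vt n ω = ∑ k ∈ Finset.range n,
      (μ[(fun ω' => V (k + 1) ω' - V k ω') | 𝒢 k]) ω)
    (n : ℕ)
    (hint1 : Integrable (fun ω => ξ ω * Vt n ω) μ)
    (hint2 : ∀ k, Integrable (fun ω => N k ω * (V (k + 1) ω - V k ω)) μ)
    (hint3 : Integrable
      (fun ω => ((Finset.range (n + 1)).sup' (by simp) fun k => |N k ω|) * V n ω) μ) :
    (∫ ω, ξ ω * Vt n ω ∂μ =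
      ∫ ω, ∑ k ∈ Finset.range n, N k ω * (V (k + 1) ω - V k ω) ∂μ) ∧
    (∫ ω, ∑ k ∈ Finset.range n, N k ω * (V (k + 1) ω - V k ω) ∂μ ≤
      ∫ ω, ((Finset.range (n + 1)).sup' (by simp) fun k => |N k ω|) * V n ω ∂μ) := by
  -- notation
  set Y : ℕ → Ω → ℝ := fun k ω => V (k + 1) ω - V k ω with hY
  set C : ℕ → Ω → ℝ := fun k => μ[Y k | 𝒢 k] with hC
  have hξint : Integrable ξ μ := hξ.integrable (by
    rw [← ENNReal.ofReal_one]
    exact ENNReal.ofReal_le_ofReal hq.le)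
  have hYint : ∀ k, Integrable (Y k) μ := fun k => (hVint (k + 1)).sub (hVint k)
  have hYnn : ∀ k ω, 0 ≤ Y k ω := fun k ω => sub_nonneg.2 (hmono ω (Nat.le_succ k))
  have hCnn : ∀ k, 0 ≤ᵐ[μ] C k := fun k =>
    condExp_nonneg (Filter.Eventually.of_forall (hYnn k))
  -- each `C k` is bounded a.e. by `Vt n` for `k < n`
  have hVtnn : 0 ≤ᵐ[μ] Vt n := by
    have : ∀ᵐ ω ∂μ, ∀ k, 0 ≤ C k ω := ae_all_iff.2 hCnn
    filter_upwards [this] with ω hω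
    rw [hVt n ω]
    exact Finset.sum_nonneg fun k _ => hω k
  have hCle : ∀ k ∈ Finset.range n, ∀ᵐ ω ∂μ, C k ω ≤ Vt n ω := by
    intro k hk
    have : ∀ᵐ ω ∂μ, ∀ j, 0 ≤ C j ω := ae_all_iff.2 hCnn
    filter_upwards [this] with ω hω
    rw [hVt n ω]
    exact Finset.single_le_sum (f := fun j => C j ω) (fun j _ => hω j) hk
  -- integrability of `ξ * C k`
  have hCint : ∀ k ∈ Finset.range n, Integrable (fun ω => ξ ω * C k ω) μ := by
    intro k hk
    refine Integrable.mono hint1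
      (hξ.aestronglyMeasurable.mul
        (stronglyMeasurable_condExp.mono (𝒢.le k)).aestronglyMeasurable) ?_
    filter_upwards [hCnn k, hCle k hk, hVtnn] with ω h1 h2 h3
    simp only [norm_mul, Real.norm_eq_abs, abs_of_nonneg h1, abs_of_nonneg h3]
    exact mul_le_mul_of_nonneg_left h2 (abs_nonneg _)
  -- key step: `∫ ξ * C k = ∫ N k * Y k`
  have key : ∀ k ∈ Finset.range n,
      ∫ ω, ξ ω * C k ω ∂μ = ∫ ω, N k ω * Y k ω ∂μ := by
    intro k hk
    have hCm : StronglyMeasurable[𝒢 k] (C k) := stronglyMeasurable_condExp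
    have hNm : StronglyMeasurable[𝒢 k] (N k) := by
      rw [hN k]; exact stronglyMeasurable_condExp
    -- left side
    have h1 : μ[fun ω => C k ω * ξ ω | 𝒢 k] =ᵐ[μ] fun ω => C k ω * N k ω := by
      have := condExp_mul_of_stronglyMeasurable_left (μ := μ) hCm
        (by simpa [Pi.mul_def, mul_comm] using hCint k hk) hξint
      rw [hN k]
      exact this
    have h2 : μ[fun ω => N k ω * Y k ω | 𝒢 k] =ᵐ[μ] fun ω => N k ω * C k ω := by
      exact condExp_mul_of_stronglyMeasurable_left (μ := μ) hNm (hint2 k) (hYint k)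
    calc ∫ ω, ξ ω * C k ω ∂μ
        = ∫ ω, (μ[fun ω => C k ω * ξ ω | 𝒢 k]) ω ∂μ := by
          rw [integral_condExp (𝒢.le k)]
          simp_rw [mul_comm]
      _ = ∫ ω, C k ω * N k ω ∂μ := integral_congr_ae h1
      _ = ∫ ω, (μ[fun ω => N k ω * Y k ω | 𝒢 k]) ω ∂μ := by
          refine integral_congr_ae ?_
          filter_upwards [h2] with ω h
          rw [mul_comm, ← h]
      _ = ∫ ω, N k ω * Y k ω ∂μ := integral_condExp (𝒢.le k)
  constructor
  · -- first identity
    have e1 : ∫ ω, ξ ω * Vt n ω ∂μ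
        = ∑ k ∈ Finset.range n, ∫ ω, ξ ω * C k ω ∂μ := by
      rw [← integral_finset_sum _ hCint]
      refine integral_congr_ae (Filter.Eventually.of_forall fun ω => ?_)
      show ξ ω * Vt n ω = ∑ k ∈ Finset.range n, ξ ω * C k ω
      rw [hVt n ω, Finset.mul_sum]
    have e2 : ∫ ω, ∑ k ∈ Finset.range n, N k ω * Y k ω ∂μ
        = ∑ k ∈ Finset.range n, ∫ ω, N k ω * Y k ω ∂μ :=
      integral_finset_sum _ fun k _ => hint2 k
    rw [e1, e2]
    exact Finset.sum_congr rfl key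
  · -- inequality
    refine integral_mono (integrable_finset_sum _ fun k _ => hint2 k) hint3 fun ω => ?_
    set M : ℝ := (Finset.range (n + 1)).sup' (by simp) fun k => |N k ω| with hM
    have hMnn : 0 ≤ M := le_trans (abs_nonneg (N 0 ω))
      (Finset.le_sup' (fun k => |N k ω|) (by simp : 0 ∈ Finset.range (n + 1)))
    calc ∑ k ∈ Finset.range n, N k ω * (V (k + 1) ω - V k ω)
        ≤ ∑ k ∈ Finset.range n, M * (V (k + 1) ω - V k ω) := by
          refine Finset.sum_le_sum fun k hk => ?_
          refine mul_le_mul_of_nonneg_right ?_ (hYnn k ω)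
          exact le_trans (le_abs_self _)
            (Finset.le_sup' (fun k => |N k ω|)
              (Finset.mem_range.2 (Nat.lt_succ_of_lt (Finset.mem_range.1 hk))))
      _ = M * V n ω := by
          rw [← Finset.mul_sum, Finset.sum_range_sub (fun k => V k ω)]
          simp [h0]
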